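/- Let s1, S1, h be rational numbers with S1 ≠ 0, let t1 = (S1^2 − h)/S1, suppose 2h + 3(s1+t1)(t1−S1) ≠ 0 and S1^2 + 3S1·s1 − 3h ≠ 0, and define s2 = [h^2 + (s1^2 + (3t1−2S1)s1 + 3t1^2 − 3t1·S1 + S1^2)h + (s1+t1)(t1−S1)(s1^2 + (t1−S1)s1 + t1^2 − t1·S1 + S1^2)] / (2h + 3(s1+t1)(t1−S1)). Then s1^2 − 4s2 = (S1^2 − S1·s1 + h)(S1·s1 − 2h)^2 / (S1^2·(S1^2 + 3S1·s1 − 3h)). -/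

import Mathlib

theorem stmt_4 (s₁ S₁ h t₁ s₂ : ℚ) (hS₁ : S₁ ≠ 0)
    (ht₁ : t₁ = (S₁ ^ 2 - h) / S₁)
    (hden : 2 * h + 3 * (s₁ + t₁) * (t₁ - S₁) ≠ 0)
    (hden2 : S₁ ^ 2 + 3 * S₁ * s₁ - 3 * h ≠ 0)
    (hs₂ : s₂ = (h ^ 2 +
        (s₁ ^ 2 + (3 * t₁ - 2 * S₁) * s₁ + 3 * t₁ ^ 2 - 3 * t₁ * S₁ + S₁ ^ 2) * h +
        (s₁ + t₁) * (t₁ - S₁) *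
          (s₁ ^ 2 + (t₁ - S₁) * s₁ + t₁ ^ 2 - t₁ * S₁ + S₁ ^ 2)) /
      (2 * h + 3 * (s₁ + t₁) * (t₁ - S₁))) :
    s₁ ^ 2 - 4 * s₂ =
      (S₁ ^ 2 - S₁ * s₁ + h) * (S₁ * s₁ - 2 * h) ^ 2 /
        (S₁ ^ 2 * (S₁ ^ 2 + 3 * S₁ * s₁ - 3 * h)) := by
  subst hs₂
  have hh : h = S₁ ^ 2 - S₁ * t₁ := by rw [ht₁]; field_simp; ring
  subst hh
  rw [← mul_div_assoc, sub_div' hden, div_eq_div_iff hden (mul_ne_zero (pow_ne_zero 2 hS₁) hden2)]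
  ring
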